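/- Let v_{i-1}, v_i, v_{i+1} be real numbers with b = v_{i+1} - v_i ≠ 0 and r = (v_i - v_{i-1})/b with r ≠ 1. Define sgn(r) = 1 if r > 0 and -1 if r ≤ 0, K = min(1, sgn(r)/(r-1)), and for η ∈ [0,1] the weight β₀^η = η·K. If K ≥ 0, then P(β₀^η) = β₀^η·(3v_i - v_{i-1})/2 + (1-β₀^η)·(v_i + v_{i+1})/2 satisfies min(v_{i-1}, v_i, v_{i+1}) ≤ P(β₀^η) ≤ max(v_{i-1}, v_i, v_{i+1}). -/
import Mathlib


theorem stmt_18 (vm v vp : ℝ) (hb : vp - v ≠ 0)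
    (r : ℝ) (hr : r = (v - vm) / (vp - v)) (hr1 : r ≠ 1)
    (K : ℝ) (hK : K = min 1 ((if r > 0 then (1:ℝ) else -1) / (r - 1)))
    (η : ℝ) (hη0 : 0 ≤ η) (hη1 : η ≤ 1) (hKpos : 0 ≤ K)
    (β : ℝ) (hβ : β = η * K) :
    min (min vm v) vp ≤ β * (3 * v - vm) / 2 + (1 - β) * (v + vp) / 2 ∧
      β * (3 * v - vm) / 2 + (1 - β) * (v + vp) / 2 ≤ max (max vm v) vp := by
  have hvm : v - vm = r * (vp - v) := by
    rw [hr]; field_simp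
  have hβ0 : 0 ≤ β := by rw [hβ]; exact mul_nonneg hη0 hKpos
  have hβK : β ≤ K := by rw [hβ]; nlinarith
  have ht : 0 ≤ 1 + β * (r - 1) ∧ 1 + β * (r - 1) ≤ 2 := by
    rcases lt_trichotomy r 1 with h | h | h
    · by_cases hrpos : r > 0
      · exfalso
        have hs : (if r > 0 then (1:ℝ) else -1) = 1 := by simp [hrpos]
        have hneg : (1:ℝ) / (r - 1) < 0 :=
          div_neg_of_pos_of_neg one_pos (by linarith)
        have : K ≤ 1 / (r - 1) := by rw [hK, hs]; exact min_le_right _ _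
        linarith
      · have hs : (if r > 0 then (1:ℝ) else -1) = -1 := by simp [hrpos]
        have hK2 : K ≤ -1 / (r - 1) := by rw [hK, hs]; exact min_le_right _ _
        have he : (-1 : ℝ) / (r - 1) = 1 / (1 - r) := by
          rw [div_eq_div_iff (by linarith) (by linarith)]; ring
        have hK3 : K * (1 - r) ≤ 1 := by
          rw [he] at hK2
          exact (le_div_iff₀ (by linarith)).mp hK2
        constructor
        · nlinarith [mul_le_mul_of_nonneg_right hβK (by linarith : (0:ℝ) ≤ 1 - r)]
        · nlinarith
    · exact absurd h hr1
    · have hs : (if r > 0 then (1:ℝ) else -1) = 1 := by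
        simp only [if_pos (by linarith : r > 0)]
      have hK2 : K ≤ 1 / (r - 1) := by rw [hK, hs]; exact min_le_right _ _
      have hK3 : K * (r - 1) ≤ 1 := by
        exact (le_div_iff₀ (by linarith)).mp hK2
      constructor
      · nlinarith
      · nlinarith [mul_le_mul_of_nonneg_right hβK (by linarith : (0:ℝ) ≤ r - 1)]
  obtain ⟨ht0, ht2⟩ := ht
  have hP : β * (3 * v - vm) / 2 + (1 - β) * (v + vp) / 2
      = v + (vp - v) * (1 + β * (r - 1)) / 2 := by
    have hvm' : vm = v - r * (vp - v) := by linarith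
    rw [hvm']; ring
  rw [hP]
  rcases hb.lt_or_gt with hneg | hpos
  · constructor
    · have h1 : vp ≤ v + (vp - v) * (1 + β * (r - 1)) / 2 := by nlinarith
      exact le_trans (min_le_right _ _) h1
    · have h1 : v + (vp - v) * (1 + β * (r - 1)) / 2 ≤ v := by nlinarith
      exact le_trans h1 (le_max_of_le_left (le_max_right _ _))
  · constructor
    · have h1 : v ≤ v + (vp - v) * (1 + β * (r - 1)) / 2 := by nlinarith
      exact le_trans (le_trans (min_le_left _ _) (min_le_right _ _)) h1
    · have h1 : v + (vp - v) * (1 + β * (r - 1)) / 2 ≤ vp := by nlinarith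
      exact le_trans h1 (le_max_right _ _)
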